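/- Let 0 < μ < L with κ = L/μ ≥ 2, and 0 < Δ < 1. Set h = 1/((4/Δ)(L − μ) + 2L), and let m be a positive integer with m ≥ 20κ/Δ². Then 1/(μ h (1 − 2Lh) m) + 2(L − μ)h/(1 − 2Lh) ≤ Δ. -/

import Mathlib

/-- simplified epoch-length bound (25), ν = 0 case: for `κ ≥ 2`, the threshold
`m ≥ 20κ/Δ²` guarantees a contraction factor of at most `Δ`. -/
theorem s2gd_simple_parameter_choice_nu_eq_zero
    {L μ κ Δ h : ℝ} (hμ : 0 < μ) (hμL : μ < L) (hκ : κ = L / μ) (hκ2 : 2 ≤ κ)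
    (hΔ0 : 0 < Δ) (hΔ1 : Δ < 1)
    (hh : h = 1 / ((4 / Δ) * (L - μ) + 2 * L))
    {m : ℕ} (hm1 : 1 ≤ m)
    (hm : 20 * κ / Δ ^ 2 ≤ (m : ℝ)) :
    1 / (μ * h * (1 - 2 * L * h) * m) + 2 * (L - μ) * h / (1 - 2 * L * h) ≤ Δ := by
  have hL : 0 < L := hμ.trans hμL
  have hLμ : 0 < L - μ := sub_pos.2 hμL
  have h2μ : 2 * μ ≤ L := by
    rw [hκ, le_div_iff₀ hμ] at hκ2; linarith
  have hm0 : (0:ℝ) < m := by exact_mod_cast hm1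
  set D := (4 / Δ) * (L - μ) + 2 * L with hDdef
  have hDpos : 0 < D := by positivity
  have h1 : 1 - 2 * L * h = (4 / Δ) * (L - μ) / D := by
    rw [hh, hDdef]
    field_simp
    ring
  have hm2 : 20 * L ≤ (m : ℝ) * (μ * Δ ^ 2) := by
    have h1' : 20 * (L / μ) ≤ (m : ℝ) * Δ ^ 2 :=
      (div_le_iff₀ (by positivity)).mp (hκ ▸ hm)
    have h2' := mul_le_mul_of_nonneg_right h1' hμ.le
    calc 20 * L = 20 * (L / μ) * μ := by field_simp
      _ ≤ (m : ℝ) * Δ ^ 2 * μ := h2'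
      _ = (m : ℝ) * (μ * Δ ^ 2) := by ring
  have hterm2 : 2 * (L - μ) * h / (1 - 2 * L * h) = Δ / 2 := by
    rw [h1, hh, hDdef]
    have hΔ : Δ ≠ 0 := hΔ0.ne'
    have hLμ' : L - μ ≠ 0 := hLμ.ne'
    have hD' : (4 / Δ) * (L - μ) + 2 * L ≠ 0 := by rw [← hDdef]; exact hDpos.ne'
    field_simp
    ring
  have hterm1 : 1 / (μ * h * (1 - 2 * L * h) * m) = Δ * D ^ 2 / (4 * μ * (L - μ) * m) := by
    rw [h1, hh, hDdef]
    have hΔ : Δ ≠ 0 := hΔ0.ne'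
    have hLμ' : L - μ ≠ 0 := hLμ.ne'
    have hD' : (4 / Δ) * (L - μ) + 2 * L ≠ 0 := by rw [← hDdef]; exact hDpos.ne'
    field_simp
  rw [hterm1, hterm2]
  have hE : D * Δ = 4 * (L - μ) + 2 * L * Δ := by
    rw [hDdef]; field_simp
  have hE2 : (4 * (L - μ) + 2 * L * Δ) ^ 2 ≤ 40 * L * (L - μ) := by
    nlinarith [mul_nonneg hμ.le hLμ.le,
      mul_nonneg (mul_nonneg hL.le hLμ.le) (by linarith : (0:ℝ) ≤ 1 - Δ),
      mul_nonneg hL.le (by linarith : (0:ℝ) ≤ L - 2 * μ),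
      mul_nonneg (sq_nonneg L) (by nlinarith : (0:ℝ) ≤ 1 - Δ ^ 2)]
  have hD2 : D ^ 2 * Δ ^ 2 ≤ 40 * L * (L - μ) := by
    calc D ^ 2 * Δ ^ 2 = (D * Δ) ^ 2 := by ring
      _ = (4 * (L - μ) + 2 * L * Δ) ^ 2 := by rw [hE]
      _ ≤ 40 * L * (L - μ) := hE2
  have key : Δ * D ^ 2 / (4 * μ * (L - μ) * m) ≤ Δ / 2 := by
    rw [div_le_div_iff₀ (by positivity) (by norm_num)]
    have step : Δ * D ^ 2 * 2 * Δ ^ 2 ≤ Δ * (4 * μ * (L - μ) * m) * Δ ^ 2 := by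
      calc Δ * D ^ 2 * 2 * Δ ^ 2 = 2 * Δ * (D ^ 2 * Δ ^ 2) := by ring
        _ ≤ 2 * Δ * (40 * L * (L - μ)) :=
            mul_le_mul_of_nonneg_left hD2 (by positivity)
        _ = 4 * Δ * (L - μ) * (20 * L) := by ring
        _ ≤ 4 * Δ * (L - μ) * ((m : ℝ) * (μ * Δ ^ 2)) :=
            mul_le_mul_of_nonneg_left hm2 (by positivity)
        _ = Δ * (4 * μ * (L - μ) * m) * Δ ^ 2 := by ring
    exact le_of_mul_le_mul_right step (by positivity)
  linarith
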